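/- Let c(i) = (i, i², ..., i^m) ∈ ℝ^m. Let k + ℓ = m with k ≥ ℓ, let s_0 < s_1 < ... < s_k and t_0 < t_1 < ... < t_ℓ be distinct parameters (with s_0 < t_0 if k = ℓ), and let σ = conv{c(s_0),...,c(s_k)} and τ = conv{c(t_0),...,c(t_ℓ)}. Then σ and τ intersect if and only if k = ⌈m/2⌉ and the vertices alternate along the moment curve: s_0 < t_0 < s_1 < t_1 < ... In this case the intersection is a single point and the signed intersection number is ℐ(σ,τ) = (−1)^{k(k−1)/2}. -/

import Mathlib

open Finset Matrix
namespace S7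

lemma neg_pow_prod_pos {ι : Type*} [DecidableEq ι] (A : Finset ι) (f : ι → ℝ)
    (h : ∀ x ∈ A, f x ≠ 0) :
    0 < (-1 : ℝ) ^ (A.filter (fun x => f x < 0)).card * ∏ x ∈ A, f x := by
  induction A using Finset.induction_on with
  | empty => simp
  | @insert a A' ha ih =>
    have hane := h a (Finset.mem_insert_self a A')
    have ih' := ih (fun x hx => h x (Finset.mem_insert_of_mem hx))
    rw [Finset.filter_insert, Finset.prod_insert ha]
    by_cases hfa : f a < 0
    · rw [if_pos hfa, Finset.card_insert_of_notMem (fun hc => ha (Finset.mem_filter.1 hc).1)]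
      rw [pow_succ]
      have : (-1 : ℝ) ^ (A'.filter (fun x => f x < 0)).card * -1 * (f a * ∏ x ∈ A', f x)
          = ((-1 : ℝ) ^ (A'.filter (fun x => f x < 0)).card * ∏ x ∈ A', f x) * (-(f a)) := by ring
      rw [this]
      exact mul_pos ih' (by linarith)
    · rw [if_neg hfa]
      have hfa' : 0 < f a := lt_of_le_of_ne (not_lt.1 hfa) (Ne.symm hane)
      have : (-1 : ℝ) ^ (A'.filter (fun x => f x < 0)).card * (f a * ∏ x ∈ A', f x)
          = ((-1 : ℝ) ^ (A'.filter (fun x => f x < 0)).card * ∏ x ∈ A', f x) * f a := by ring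
      rw [this]
      exact mul_pos ih' hfa'

lemma vdet_pos {n : ℕ} {e : Fin n → ℝ} (he : StrictMono e) : 0 < (Matrix.vandermonde e).det := by
  rw [Matrix.det_vandermonde]
  exact Finset.prod_pos fun i _ => Finset.prod_pos fun j hj => sub_pos.2 (he (Finset.mem_Ioi.1 hj))

lemma ker_unique {n : ℕ} {e : Fin n → ℝ} (he : Function.Injective e) {w : Fin n → ℝ}
    (hw : ∀ d : Fin n, ∑ r, w r * e r ^ (d : ℕ) = 0) : w = 0 := by
  have hdet : (Matrix.vandermonde e)ᵀ.det ≠ 0 := by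
    rw [Matrix.det_transpose]
    exact Matrix.det_vandermonde_ne_zero_iff.2 he
  have h : (Matrix.vandermonde e)ᵀ *ᵥ w = 0 := by
    ext d
    simp only [Matrix.mulVec, dotProduct, Matrix.transpose_apply, Matrix.vandermonde_apply,
      Pi.zero_apply]
    rw [← hw d]
    exact Finset.sum_congr rfl fun r _ => mul_comm _ _
  have := Matrix.eq_zero_of_mulVec_eq_zero hdet h
  exact this

noncomputable def mu {n : ℕ} (e : Fin (n + 1) → ℝ) (r : Fin (n + 1)) : ℝ :=
  (-1 : ℝ) ^ (r : ℕ) * (Matrix.vandermonde (e ∘ r.succAbove)).det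

lemma mu_sign {n : ℕ} {e : Fin (n + 1) → ℝ} (he : StrictMono e) (r : Fin (n + 1)) :
    0 < (-1 : ℝ) ^ (r : ℕ) * mu e r := by
  have h1 : 0 < (Matrix.vandermonde (e ∘ r.succAbove)).det := by
    apply vdet_pos
    exact he.comp (Fin.strictMono_succAbove r)
  have h2 : (-1 : ℝ) ^ (r : ℕ) * mu e r = ((-1 : ℝ) ^ (r : ℕ))^2 * (Matrix.vandermonde (e ∘ r.succAbove)).det := by
    rw [mu]; ring
  rw [h2]
  positivity

lemma mu_ne_zero {n : ℕ} {e : Fin (n + 1) → ℝ} (he : Function.Injective e) (r : Fin (n + 1)) :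
    mu e r ≠ 0 := by
  have : (Matrix.vandermonde (e ∘ r.succAbove)).det ≠ 0 :=
    Matrix.det_vandermonde_ne_zero_iff.2 (he.comp (Fin.succAbove_right_injective))
  simp only [mu]
  intro hc
  rcases mul_eq_zero.1 hc with h | h
  · exact absurd h (by positivity)
  · exact this h

lemma mu_kernel {n : ℕ} (e : Fin (n + 1) → ℝ) (d : Fin n) :
    ∑ r, mu e r * e r ^ (d : ℕ) = 0 := by
  set M : Matrix (Fin (n + 1)) (Fin (n + 1)) ℝ :=
    Matrix.of (fun r c => if (c : ℕ) < n then e r ^ (c : ℕ) else e r ^ (d : ℕ)) with hM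
  have h0 : M.det = 0 := by
    apply Matrix.det_zero_of_column_eq (i := Fin.castSucc d) (j := Fin.last n)
      (Fin.castSucc_lt_last d).ne
    intro r
    simp only [hM, Matrix.of_apply, Fin.coe_castSucc, Fin.val_last]
    rw [if_pos d.isLt, if_neg (lt_irrefl n)]
  have hexp := Matrix.det_succ_column M (Fin.last n)
  rw [h0] at hexp
  have hsub : ∀ r : Fin (n + 1),
      (M.submatrix r.succAbove (Fin.last n).succAbove).det
        = (Matrix.vandermonde (e ∘ r.succAbove)).det := by
    intro r
    congr 1
    ext r' c'
    simp only [Matrix.submatrix_apply, Fin.succAbove_last, hM, Matrix.of_apply,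
      Fin.coe_castSucc, Matrix.vandermonde_apply, Function.comp_apply]
    rw [if_pos c'.isLt]
  have key : ∀ r : Fin (n + 1),
      (-1 : ℝ) ^ ((r : ℕ) + (Fin.last n : ℕ)) * M r (Fin.last n)
          * (M.submatrix r.succAbove (Fin.last n).succAbove).det
        = (-1 : ℝ) ^ (n : ℕ) * (mu e r * e r ^ (d : ℕ)) := by
    intro r
    rw [hsub r]
    simp only [hM, Matrix.of_apply, Fin.val_last, if_neg (lt_irrefl n), mu]
    rw [pow_add]
    ring
  rw [Finset.sum_congr rfl (fun r _ => key r), ← Finset.mul_sum] at hexp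
  have hne : (-1 : ℝ) ^ n ≠ 0 := by positivity
  have := (mul_eq_zero.1 hexp.symm).resolve_left hne
  exact this

lemma ker_eq {n : ℕ} {e : Fin (n + 2) → ℝ} (he : Function.Injective e) {w : Fin (n + 2) → ℝ}
    (hw : ∀ d : Fin (n + 1), ∑ r, w r * e r ^ (d : ℕ) = 0) :
    ∀ r, w r = (w 0 / mu e 0) * mu e r := by
  set u : Fin (n + 2) → ℝ := fun r => mu e 0 * w r - w 0 * mu e r with hu
  have hukernel : ∀ d : Fin (n + 1), ∑ r, u r * e r ^ (d : ℕ) = 0 := by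
    intro d
    have h1 := hw d
    have h2 := mu_kernel e d
    calc ∑ r, u r * e r ^ (d : ℕ)
        = mu e 0 * ∑ r, w r * e r ^ (d : ℕ) - w 0 * ∑ r, mu e r * e r ^ (d : ℕ) := by
          rw [Finset.mul_sum, Finset.mul_sum, ← Finset.sum_sub_distrib]
          exact Finset.sum_congr rfl fun r _ => by simp only [hu]; ring
      _ = 0 := by rw [h1, h2]; ring
  have hu0 : u 0 = 0 := by simp [hu]; ring
  have husucc : (fun r : Fin (n + 1) => u r.succ) = 0 := by
    apply ker_unique (he.comp (Fin.succ_injective _))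
    intro d
    have := hukernel d
    rw [Fin.sum_univ_succ] at this
    rw [hu0] at this
    simpa using this
  have huall : ∀ r, u r = 0 := by
    intro r
    rcases Fin.eq_zero_or_eq_succ r with h | ⟨r', rfl⟩
    · rw [h]; exact hu0
    · exact congrFun husucc r'
  intro r
  have h := huall r
  have hmu0 : mu e 0 ≠ 0 := mu_ne_zero he 0
  field_simp
  simp only [hu] at h
  linarith [h]

lemma mem_hull_iff {M n : ℕ} (f : Fin n → (Fin M → ℝ)) (x : Fin M → ℝ) :
    x ∈ convexHull ℝ (Set.range f) ↔
      ∃ w : Fin n → ℝ, (∀ i, 0 ≤ w i) ∧ ∑ i, w i = 1 ∧ ∑ i, w i • f i = x := by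
  constructor
  · intro hx
    rw [convexHull_range_eq_exists_affineCombination] at hx
    obtain ⟨A, w, hw0, hw1, hx⟩ := hx
    refine ⟨fun i => if i ∈ A then w i else 0, fun i => ?_, ?_, ?_⟩
    · by_cases h : i ∈ A
      · simpa [h] using hw0 i h
      · simp [h]
    · rw [Finset.sum_ite_mem, Finset.univ_inter, hw1]
    · rw [← hx, Finset.affineCombination_eq_linear_combination A f w hw1]
      have hterm : ∀ i : Fin n, (fun i => if i ∈ A then w i else 0) i • f i
          = if i ∈ A then w i • f i else 0 := by
        intro i
        by_cases h : i ∈ A <;> simp [h]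
      rw [Finset.sum_congr rfl fun i _ => hterm i, Finset.sum_ite_mem, Finset.univ_inter]
  · rintro ⟨w, h0, h1, hx⟩
    exact mem_convexHull_of_exists_fintype w f h0 h1 (fun i => Set.mem_range_self i) hx

lemma sum_split (k l : ℕ) (f : Fin (k + l + 2) → ℝ) :
    ∑ r, f r = ∑ i : Fin (k + 1), f ⟨(i : ℕ), by omega⟩
      + ∑ j : Fin (l + 1), f ⟨k + 1 + (j : ℕ), by omega⟩ := by
  rw [← (finCongr (by omega : (k + 1) + (l + 1) = k + l + 2)).sum_comp,
    ← finSumFinEquiv.sum_comp, Fintype.sum_sum_type]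
  congr 1 <;>
    (apply Finset.sum_congr rfl; intro x _; congr 1; exact Fin.ext (by simp))

def paritySplitEquiv (k l : ℕ) (hlk : l ≤ k) (hkl1 : k ≤ l + 1) :
    Fin (k + 1) ⊕ Fin (l + 1) ≃ Fin (k + l + 2) where
  toFun x := Sum.rec (fun i => ⟨2 * (i : ℕ), by have := i.isLt; omega⟩)
    (fun j => ⟨2 * (j : ℕ) + 1, by have := j.isLt; omega⟩) x
  invFun r := if h : (r : ℕ) % 2 = 0 then Sum.inl ⟨(r : ℕ) / 2, by have := r.isLt; omega⟩
    else Sum.inr ⟨(r : ℕ) / 2, by have := r.isLt; omega⟩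
  left_inv x := by
    rcases x with i | j
    · dsimp only
      rw [dif_pos (show (2 * (i : ℕ)) % 2 = 0 by omega)]
      exact congrArg Sum.inl (Fin.ext (show 2 * (i : ℕ) / 2 = i by omega))
    · dsimp only
      rw [dif_neg (show ¬ (2 * (j : ℕ) + 1) % 2 = 0 by omega)]
      exact congrArg Sum.inr (Fin.ext (show (2 * (j : ℕ) + 1) / 2 = j by omega))
  right_inv r := by
    by_cases h : (r : ℕ) % 2 = 0
    · dsimp only
      rw [dif_pos h]
      exact Fin.ext (show 2 * ((r : ℕ) / 2) = (r : ℕ) by omega)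
    · dsimp only
      rw [dif_neg h]
      exact Fin.ext (show 2 * ((r : ℕ) / 2) + 1 = (r : ℕ) by omega)

lemma sum_parity_split (k l : ℕ) (hlk : l ≤ k) (hkl1 : k ≤ l + 1) (f : Fin (k + l + 2) → ℝ) :
    ∑ r, f r = ∑ i : Fin (k + 1), f ⟨2 * (i : ℕ), by have := i.isLt; omega⟩
      + ∑ j : Fin (l + 1), f ⟨2 * (j : ℕ) + 1, by have := j.isLt; omega⟩ := by
  rw [← (paritySplitEquiv k l hlk hkl1).sum_comp, Fintype.sum_sum_type]
  rfl

lemma card_filter_interval (n a b : ℕ) (hb : b ≤ n) :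
    ((Finset.univ : Finset (Fin n)).filter (fun (r : Fin n) => a ≤ (r : ℕ) ∧ (r : ℕ) < b)).card
      = b - a := by
  rw [← Nat.card_Ico a b]
  refine Finset.card_nbij (fun r => (r : ℕ)) ?_ ?_ ?_
  · intro r hr
    simp only [Finset.coe_filter, Finset.mem_filter, Set.mem_setOf_eq] at hr
    rw [Finset.mem_coe, Finset.mem_Ico]
    exact hr.2
  · intro r hr r' hr' h
    exact Fin.ext h
  · intro x hx
    simp only [Finset.coe_Ico, Set.mem_Ico] at hx
    refine ⟨⟨x, by omega⟩, ?_, rfl⟩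
    simp only [Finset.mem_coe, Finset.mem_filter, Finset.mem_univ, true_and]
    exact hx

lemma chain_lb (K : ℕ) (g : ℕ → ℕ) (hstep : ∀ i, i + 1 ≤ K → g i + 2 ≤ g (i + 1)) :
    ∀ i, i ≤ K → g 0 + 2 * i ≤ g i := by
  intro i
  induction i with
  | zero => intro _; omega
  | succ n ih =>
    intro h
    have h1 := ih (by omega)
    have h2 := hstep n (by omega)
    omega

lemma chain_ub (K : ℕ) (g : ℕ → ℕ) (hstep : ∀ i, i + 1 ≤ K → g i + 2 ≤ g (i + 1)) :
    ∀ i, i ≤ K → g i + 2 * (K - i) ≤ g K := by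
  have H : ∀ d, d ≤ K → g (K - d) + 2 * d ≤ g K := by
    intro d
    induction d with
    | zero => intro _; simp
    | succ n ih =>
      intro h
      have h1 := ih (by omega)
      have h2 := hstep (K - (n + 1)) (by omega)
      have h3 : K - (n + 1) + 1 = K - n := by omega
      rw [h3] at h2
      omega
  intro i hi
  have h5 := H (K - i) (by omega)
  have h4 : K - (K - i) = i := by omega
  rw [h4] at h5
  omega


lemma pos_pin (K : ℕ) (g : Fin (K + 1) → ℕ) (par : ℕ)
    (hpar : ∀ i, g i % 2 = par % 2)
    (hmono : ∀ i i' : Fin (K + 1), i < i' → g i < g i') :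
    ∀ i : Fin (K + 1), (2 * (i : ℕ) + g 0 ≤ g i) ∧ (g i + 2 * (K - (i : ℕ)) ≤ g (Fin.last K)) := by
  set g' : ℕ → ℕ := fun i => g ⟨min i K, by omega⟩ with hg'
  have hg'eq : ∀ i : ℕ, ∀ h : i < K + 1, g' i = g ⟨i, h⟩ := by
    intro i h
    simp only [hg']
    congr 1
    exact Fin.ext (by simp only []; omega)
  have hstep : ∀ i, i + 1 ≤ K → g' i + 2 ≤ g' (i + 1) := by
    intro i h
    rw [hg'eq i (by omega), hg'eq (i + 1) (by omega)]
    have h1 := hmono ⟨i, by omega⟩ ⟨i + 1, by omega⟩ (by simp [Fin.lt_def])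
    have h2 := hpar ⟨i, by omega⟩
    have h3 := hpar ⟨i + 1, by omega⟩
    omega
  intro i
  have hlb := chain_lb K g' hstep (i : ℕ) (by have := i.isLt; omega)
  have hub := chain_ub K g' hstep (i : ℕ) (by have := i.isLt; omega)
  rw [hg'eq 0 (by omega), hg'eq (i : ℕ) i.isLt] at hlb
  rw [hg'eq (i : ℕ) i.isLt, hg'eq K (by omega)] at hub
  have e1 : (⟨(i : ℕ), i.isLt⟩ : Fin (K + 1)) = i := Fin.ext rfl
  have e2 : (⟨0, by omega⟩ : Fin (K + 1)) = 0 := Fin.ext (by simp)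
  have e3 : (⟨K, by omega⟩ : Fin (K + 1)) = Fin.last K := Fin.ext (by simp)
  rw [e1, e2] at hlb
  rw [e1, e3] at hub
  omega

lemma forward (k l : ℕ) (hlk : l ≤ k)
    (s : Fin (k + 1) → ℝ) (t : Fin (l + 1) → ℝ)
    (hs : StrictMono s) (ht : StrictMono t)
    (hall : ∀ i j, s i ≠ t j)
    (heq0 : k = l → s 0 < t 0)
    (a : Fin (k + 1) → ℝ) (b : Fin (l + 1) → ℝ)
    (ha0 : ∀ i, 0 ≤ a i) (hb0 : ∀ j, 0 ≤ b j)
    (ha1 : ∑ i, a i = 1) (hb1 : ∑ j, b j = 1)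
    (hab : ∀ d : Fin (k + l), ∑ i, a i * s i ^ ((d : ℕ) + 1) = ∑ j, b j * t j ^ ((d : ℕ) + 1)) :
    k ≤ l + 1 ∧ (∀ j : Fin (l + 1), ∀ h : (j : ℕ) < k + 1, s ⟨(j : ℕ), h⟩ < t j) ∧
      (∀ j : Fin (l + 1), ∀ h : (j : ℕ) + 1 < k + 1, t j < s ⟨(j : ℕ) + 1, h⟩) := by
  classical
  set e : Fin (k + l + 2) → ℝ := fun r =>
    if h : (r : ℕ) < k + 1 then s ⟨(r : ℕ), h⟩
    else t ⟨(r : ℕ) - (k + 1), by have := r.isLt; omega⟩ with he_def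
  set w : Fin (k + l + 2) → ℝ := fun r =>
    if h : (r : ℕ) < k + 1 then a ⟨(r : ℕ), h⟩
    else -b ⟨(r : ℕ) - (k + 1), by have := r.isLt; omega⟩ with hw_def
  have hes : ∀ i : Fin (k + 1), e ⟨(i : ℕ), by have := i.isLt; omega⟩ = s i := by
    intro i
    simp only [he_def]
    rw [dif_pos i.isLt]
  have het : ∀ j : Fin (l + 1), e ⟨k + 1 + (j : ℕ), by have := j.isLt; omega⟩ = t j := by
    intro j
    simp only [he_def]
    rw [dif_neg (by omega)]
    exact congrArg t (Fin.ext (show k + 1 + (j : ℕ) - (k + 1) = (j : ℕ) by omega))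
  have hws : ∀ i : Fin (k + 1), w ⟨(i : ℕ), by have := i.isLt; omega⟩ = a i := by
    intro i
    simp only [hw_def]
    rw [dif_pos i.isLt]
  have hwt : ∀ j : Fin (l + 1), w ⟨k + 1 + (j : ℕ), by have := j.isLt; omega⟩ = -b j := by
    intro j
    simp only [hw_def]
    rw [dif_neg (by omega)]
    exact congrArg (fun x => -(b x)) (Fin.ext (show k + 1 + (j : ℕ) - (k + 1) = (j : ℕ) by omega))
  have einj : Function.Injective e := by
    intro r r' hrr
    simp only [he_def] at hrr
    by_cases h1 : (r : ℕ) < k + 1 <;> by_cases h2 : (r' : ℕ) < k + 1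
    · rw [dif_pos h1, dif_pos h2] at hrr
      have := hs.injective hrr
      exact Fin.ext (by simpa using congrArg Fin.val this)
    · rw [dif_pos h1, dif_neg h2] at hrr
      exact absurd hrr (hall _ _)
    · rw [dif_neg h1, dif_pos h2] at hrr
      exact absurd hrr.symm (hall _ _)
    · rw [dif_neg h1, dif_neg h2] at hrr
      have := ht.injective hrr
      have := congrArg Fin.val this
      simp only at this
      have hr := r.isLt
      have hr' := r'.isLt
      exact Fin.ext (by omega)
  have hwker : ∀ d : Fin (k + l + 1), ∑ r, w r * e r ^ (d : ℕ) = 0 := by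
    intro d
    rw [sum_split k l (fun r => w r * e r ^ (d : ℕ))]
    have hS : ∀ i : Fin (k + 1),
        w ⟨(i : ℕ), by have := i.isLt; omega⟩ * e ⟨(i : ℕ), by have := i.isLt; omega⟩ ^ (d : ℕ)
          = a i * s i ^ (d : ℕ) := by
      intro i
      rw [hws, hes]
    have hT : ∀ j : Fin (l + 1),
        w ⟨k + 1 + (j : ℕ), by have := j.isLt; omega⟩
          * e ⟨k + 1 + (j : ℕ), by have := j.isLt; omega⟩ ^ (d : ℕ)
          = -(b j * t j ^ (d : ℕ)) := by
      intro j
      rw [hwt, het]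
      ring
    rw [Finset.sum_congr rfl fun i _ => hS i, Finset.sum_congr rfl fun j _ => hT j]
    rw [Finset.sum_neg_distrib]
    rcases Nat.eq_zero_or_pos (d : ℕ) with hd | hd
    · rw [hd]
      simp only [pow_zero, mul_one]
      rw [ha1, hb1]
      ring
    · obtain ⟨n, hn⟩ : ∃ n, (d : ℕ) = n + 1 := ⟨(d : ℕ) - 1, by omega⟩
      have hnlt : n < k + l := by have := d.isLt; omega
      have h9 : ∑ i, a i * s i ^ (n + 1) = ∑ j, b j * t j ^ (n + 1) := hab ⟨n, hnlt⟩
      rw [hn]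
      linarith [h9]
  set π := Tuple.sort e with hπ
  have he'inj : Function.Injective (e ∘ π) := einj.comp π.injective
  have he' : StrictMono (e ∘ π) := (Tuple.monotone_sort e).strictMono_of_injective he'inj
  set w' : Fin (k + l + 2) → ℝ := w ∘ π with hw'
  have hw'ker : ∀ d : Fin (k + l + 1), ∑ r, w' r * (e ∘ π) r ^ (d : ℕ) = 0 := by
    intro d
    rw [← hwker d]
    exact Equiv.sum_comp π (fun r => w r * e r ^ (d : ℕ))
  have hlin : ∀ r, w' r = (w' 0 / mu (e ∘ π) 0) * mu (e ∘ π) r := ker_eq he'inj hw'ker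
  set lam := w' 0 / mu (e ∘ π) 0 with hlam_def
  have hmune : ∀ r, mu (e ∘ π) r ≠ 0 := mu_ne_zero he'inj
  have hVpos : ∀ r : Fin (k + l + 2), 0 < (-1 : ℝ) ^ (r : ℕ) * mu (e ∘ π) r := mu_sign he'
  have hw'ne : ∀ r, w' r ≠ 0 := by
    intro r
    -- first: some a i ≠ 0
    have hex : ∃ i, a i ≠ 0 := by
      by_contra hco
      push_neg at hco
      rw [Finset.sum_congr rfl fun i _ => hco i] at ha1
      simp at ha1
    obtain ⟨i0, hi0⟩ := hex
    have hwne : w ⟨(i0 : ℕ), by have := i0.isLt; omega⟩ ≠ 0 := by rw [hws]; exact hi0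
    have hw'some : w' (π.symm ⟨(i0 : ℕ), by have := i0.isLt; omega⟩) ≠ 0 := by
      simp only [hw', Function.comp_apply, Equiv.apply_symm_apply]
      exact hwne
    have hlamne : lam ≠ 0 := by
      intro hz
      apply hw'some
      rw [hlin (π.symm ⟨(i0 : ℕ), by have := i0.isLt; omega⟩), hz, zero_mul]
    rw [hlin r]
    exact mul_ne_zero hlamne (hmune r)
  have hlamne : lam ≠ 0 := by
    intro hz
    apply hw'ne 0
    rw [hlin 0, hz, zero_mul]
  have heven : ∀ q : Fin (k + l + 2), (q : ℕ) % 2 = 0 → (0 < w' q ↔ 0 < lam) := by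
    intro q hq
    have hmupos : 0 < mu (e ∘ π) q := by
      have := hVpos q
      rwa [Even.neg_one_pow (Nat.even_iff.2 hq), one_mul] at this
    rw [hlin q]
    constructor
    · intro h
      by_contra hc
      push_neg at hc
      nlinarith
    · intro h
      positivity
  have hodd : ∀ q : Fin (k + l + 2), (q : ℕ) % 2 = 1 → (0 < w' q ↔ lam < 0) := by
    intro q hq
    have hmuneg : mu (e ∘ π) q < 0 := by
      have := hVpos q
      rw [Odd.neg_one_pow (Nat.odd_iff.2 hq)] at this
      linarith
    rw [hlin q]
    constructor
    · intro h
      by_contra hc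
      push_neg at hc
      nlinarith
    · intro h
      nlinarith
  -- positions
  have hapos : ∀ i, 0 < a i := by
    intro i
    rcases lt_or_eq_of_le (ha0 i) with h | h
    · exact h
    · exfalso
      apply hw'ne (π.symm ⟨(i : ℕ), by have := i.isLt; omega⟩)
      simp only [hw', Function.comp_apply, Equiv.apply_symm_apply]
      rw [hws]
      exact h.symm
  have hbpos : ∀ j, 0 < b j := by
    intro j
    rcases lt_or_eq_of_le (hb0 j) with h | h
    · exact h
    · exfalso
      apply hw'ne (π.symm ⟨k + 1 + (j : ℕ), by have := j.isLt; omega⟩)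
      simp only [hw', Function.comp_apply, Equiv.apply_symm_apply]
      rw [hwt]
      rw [← h]
      ring
  set ps : Fin (k + 1) → ℕ := fun i => ((π.symm ⟨(i : ℕ), by have := i.isLt; omega⟩ : Fin (k + l + 2)) : ℕ) with hps_def
  set pt : Fin (l + 1) → ℕ := fun j => ((π.symm ⟨k + 1 + (j : ℕ), by have := j.isLt; omega⟩ : Fin (k + l + 2)) : ℕ) with hpt_def
  have hw'ps : ∀ i : Fin (k + 1), w' (π.symm ⟨(i : ℕ), by have := i.isLt; omega⟩) = a i := by
    intro i
    simp only [hw', Function.comp_apply, Equiv.apply_symm_apply]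
    exact hws i
  have hw'pt : ∀ j : Fin (l + 1), w' (π.symm ⟨k + 1 + (j : ℕ), by have := j.isLt; omega⟩) = -b j := by
    intro j
    simp only [hw', Function.comp_apply, Equiv.apply_symm_apply]
    exact hwt j
  have he'ps : ∀ i : Fin (k + 1), (e ∘ π) (π.symm ⟨(i : ℕ), by have := i.isLt; omega⟩) = s i := by
    intro i
    simp only [Function.comp_apply, Equiv.apply_symm_apply]
    exact hes i
  have he'pt : ∀ j : Fin (l + 1), (e ∘ π) (π.symm ⟨k + 1 + (j : ℕ), by have := j.isLt; omega⟩) = t j := by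
    intro j
    simp only [Function.comp_apply, Equiv.apply_symm_apply]
    exact het j
  -- monotonicity of positions
  have hps_mono : ∀ i i' : Fin (k + 1), i < i' → ps i < ps i' := by
    intro i i' hii
    have h1 : (e ∘ π) (π.symm ⟨(i : ℕ), by have := i.isLt; omega⟩)
        < (e ∘ π) (π.symm ⟨(i' : ℕ), by have := i'.isLt; omega⟩) := by
      rw [he'ps, he'ps]
      exact hs hii
    have := he'.lt_iff_lt.1 h1
    exact this
  have hpt_mono : ∀ j j' : Fin (l + 1), j < j' → pt j < pt j' := by
    intro j j' hjj
    have h1 : (e ∘ π) (π.symm ⟨k + 1 + (j : ℕ), by have := j.isLt; omega⟩)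
        < (e ∘ π) (π.symm ⟨k + 1 + (j' : ℕ), by have := j'.isLt; omega⟩) := by
      rw [he'pt, he'pt]
      exact ht hjj
    exact he'.lt_iff_lt.1 h1
  have hps_lt : ∀ i : Fin (k + 1), ps i < k + l + 2 := fun i => (π.symm _).isLt
  have hpt_lt : ∀ j : Fin (l + 1), pt j < k + l + 2 := fun j => (π.symm _).isLt
  -- the comparison between s and t positions via e'
  have hcmp : ∀ (i : Fin (k + 1)) (j : Fin (l + 1)), ps i < pt j → s i < t j := by
    intro i j h
    have h2 : (π.symm ⟨(i : ℕ), by have := i.isLt; omega⟩ : Fin (k + l + 2))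
        < π.symm ⟨k + 1 + (j : ℕ), by have := j.isLt; omega⟩ := by
      rw [Fin.lt_def]
      exact h
    have := he' h2
    rwa [he'ps, he'pt] at this
  have hcmp' : ∀ (i : Fin (k + 1)) (j : Fin (l + 1)), pt j < ps i → t j < s i := by
    intro i j h
    have h2 : (π.symm ⟨k + 1 + (j : ℕ), by have := j.isLt; omega⟩ : Fin (k + l + 2))
        < π.symm ⟨(i : ℕ), by have := i.isLt; omega⟩ := by
      rw [Fin.lt_def]
      exact h
    have := he' h2
    rwa [he'ps, he'pt] at this
  rcases lt_trichotomy lam 0 with hl | hl | hl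
  · -- lam < 0 : leads to contradiction with heq0
    exfalso
    have hpse : ∀ i : Fin (k + 1), ps i % 2 = 1 % 2 := by
      intro i
      rcases Nat.mod_two_eq_zero_or_one (ps i) with h | h
      · exfalso
        have := (heven (π.symm ⟨(i : ℕ), by have := i.isLt; omega⟩) h).1 (by rw [hw'ps]; exact hapos i)
        linarith
      · exact h
    have hpte : ∀ j : Fin (l + 1), pt j % 2 = 0 % 2 := by
      intro j
      rcases Nat.mod_two_eq_zero_or_one (pt j) with h | h
      · exact h
      · exfalso
        have h2 := (hodd (π.symm ⟨k + 1 + (j : ℕ), by have := j.isLt; omega⟩) h).2 hl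
        rw [hw'pt] at h2
        have := hbpos j
        linarith
    have hpinS := pos_pin k ps 1 hpse hps_mono
    have hpinT := pos_pin l pt 0 hpte hpt_mono
    have hps0 : ps 0 % 2 = 1 % 2 := hpse 0
    have hlastS := hps_lt (Fin.last k)
    have hlastT := hpt_lt (Fin.last l)
    have hkl : k = l := by
      have h1 := (hpinS (Fin.last k)).1
      simp only [Fin.val_last] at h1
      omega
    have hpt0 : pt 0 = 0 := by
      have h1 := (hpinT 0).2
      have h2 := hpte 0
      simp only [Fin.val_zero] at h1
      omega
    have hps0' : 1 ≤ ps 0 := by omega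
    have := hcmp' 0 0 (by omega)
    have := heq0 hkl
    linarith
  · exact absurd hl hlamne
  · -- lam > 0
    have hpse : ∀ i : Fin (k + 1), ps i % 2 = 0 % 2 := by
      intro i
      rcases Nat.mod_two_eq_zero_or_one (ps i) with h | h
      · exact h
      · exfalso
        have := (hodd (π.symm ⟨(i : ℕ), by have := i.isLt; omega⟩) h).1 (by rw [hw'ps]; exact hapos i)
        linarith
    have hpte : ∀ j : Fin (l + 1), pt j % 2 = 1 % 2 := by
      intro j
      rcases Nat.mod_two_eq_zero_or_one (pt j) with h | h
      · exfalso
        have h2 := (heven (π.symm ⟨k + 1 + (j : ℕ), by have := j.isLt; omega⟩) h).2 hl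
        rw [hw'pt] at h2
        have := hbpos j
        linarith
      · exact h
    have hpinS := pos_pin k ps 0 hpse hps_mono
    have hpinT := pos_pin l pt 1 hpte hpt_mono
    have hlastS := hps_lt (Fin.last k)
    have hlastT := hpt_lt (Fin.last l)
    have hk1 : k ≤ l + 1 := by
      have h1 := (hpinS (Fin.last k)).1
      simp only [Fin.val_last] at h1
      omega
    have hps_eq : ∀ i : Fin (k + 1), ps i = 2 * (i : ℕ) := by
      intro i
      have h1 := (hpinS i).1
      have h2 := (hpinS i).2
      have h3 := hpse i
      have h4 := hpse 0
      have h5 := i.isLt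
      try simp only [Fin.val_last] at h2
      omega
    have hpt_eq : ∀ j : Fin (l + 1), pt j = 2 * (j : ℕ) + 1 := by
      intro j
      have h1 := (hpinT j).1
      have h2 := (hpinT j).2
      have h3 := hpte j
      have h4 := hpte 0
      have h5 := j.isLt
      try simp only [Fin.val_last] at h2
      omega
    refine ⟨hk1, ?_, ?_⟩
    · intro j hj
      apply hcmp ⟨(j : ℕ), hj⟩ j
      rw [hps_eq, hpt_eq]
      show 2 * (j : ℕ) < 2 * (j : ℕ) + 1
      omega
    · intro j hj
      apply hcmp' ⟨(j : ℕ) + 1, hj⟩ j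
      rw [hps_eq, hpt_eq]
      show 2 * (j : ℕ) + 1 < 2 * ((j : ℕ) + 1)
      omega



lemma main_alt (k l : ℕ) (hlk : l ≤ k) (hk1 : k ≤ l + 1)
    (s : Fin (k + 1) → ℝ) (t : Fin (l + 1) → ℝ) (hs : StrictMono s) (ht : StrictMono t)
    (alt1 : ∀ j : Fin (l + 1), ∀ h : (j : ℕ) < k + 1, s ⟨(j : ℕ), h⟩ < t j)
    (alt2 : ∀ j : Fin (l + 1), ∀ h : (j : ℕ) + 1 < k + 1, t j < s ⟨(j : ℕ) + 1, h⟩) :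
    ∃ (A : Fin (k + 1) → ℝ) (B : Fin (l + 1) → ℝ),
      (∀ i, 0 < A i) ∧ (∀ j, 0 < B j) ∧ (∑ i, A i = 1) ∧ (∑ j, B j = 1) ∧
      (∀ dn : ℕ, 0 < dn → dn < k + l + 1 →
        ∑ i, A i * s i ^ dn = ∑ j, B j * t j ^ dn) ∧
      (∀ (a : Fin (k + 1) → ℝ) (b : Fin (l + 1) → ℝ), (∑ i, a i = 1) → (∑ j, b j = 1) →
        (∀ dn : ℕ, 0 < dn → dn < k + l + 1 →
          ∑ i, a i * s i ^ dn = ∑ j, b j * t j ^ dn) →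
        a = A ∧ b = B) := by
  classical
  have hst : ∀ (i j : ℕ) (hi : i < k + 1) (hj : j < l + 1), i ≤ j → s ⟨i, hi⟩ < t ⟨j, hj⟩ := by
    intro i j hi hj hij
    have h1 : s ⟨i, hi⟩ ≤ s ⟨j, by omega⟩ := hs.monotone (by rw [Fin.mk_le_mk]; omega)
    have h2 := alt1 ⟨j, hj⟩ (show j < k + 1 by omega)
    exact lt_of_le_of_lt h1 h2
  have hts : ∀ (i j : ℕ) (hi : i < k + 1) (hj : j < l + 1), j < i → t ⟨j, hj⟩ < s ⟨i, hi⟩ := by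
    intro i j hi hj hij
    have h2 := alt2 ⟨j, hj⟩ (show j + 1 < k + 1 by omega)
    have h1 : s ⟨j + 1, by omega⟩ ≤ s ⟨i, hi⟩ := hs.monotone (by rw [Fin.mk_le_mk]; omega)
    exact lt_of_lt_of_le h2 h1
  set E : Fin (k + l + 2) → ℝ := fun r =>
    if h : (r : ℕ) % 2 = 0 then s ⟨(r : ℕ) / 2, by have := r.isLt; omega⟩
    else t ⟨(r : ℕ) / 2, by have := r.isLt; omega⟩ with hE_def
  have hE : StrictMono E := by
    intro r r' hrr
    rw [Fin.lt_def] at hrr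
    simp only [hE_def]
    by_cases h1 : (r : ℕ) % 2 = 0 <;> by_cases h2 : (r' : ℕ) % 2 = 0
    · rw [dif_pos h1, dif_pos h2]
      exact hs (by rw [Fin.mk_lt_mk]; omega)
    · rw [dif_pos h1, dif_neg h2]
      exact hst _ _ _ _ (by omega)
    · rw [dif_neg h1, dif_pos h2]
      exact hts _ _ _ _ (by omega)
    · rw [dif_neg h1, dif_neg h2]
      exact ht (by rw [Fin.mk_lt_mk]; omega)
  have hEs : ∀ i : Fin (k + 1), E ⟨2 * (i : ℕ), by have := i.isLt; omega⟩ = s i := by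
    intro i
    simp only [hE_def]
    rw [dif_pos (show (2 * (i : ℕ)) % 2 = 0 by omega)]
    exact congrArg s (Fin.ext (show 2 * (i : ℕ) / 2 = (i : ℕ) by omega))
  have hEt : ∀ j : Fin (l + 1), E ⟨2 * (j : ℕ) + 1, by have := j.isLt; omega⟩ = t j := by
    intro j
    simp only [hE_def]
    rw [dif_neg (show ¬ (2 * (j : ℕ) + 1) % 2 = 0 by omega)]
    exact congrArg t (Fin.ext (show (2 * (j : ℕ) + 1) / 2 = (j : ℕ) by omega))
  have hμe : ∀ i : Fin (k + 1), 0 < mu E ⟨2 * (i : ℕ), by have := i.isLt; omega⟩ := by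
    intro i
    have h := mu_sign hE ⟨2 * (i : ℕ), by have := i.isLt; omega⟩
    rwa [show (((⟨2 * (i : ℕ), by have := i.isLt; omega⟩ : Fin (k + l + 2))) : ℕ) = 2 * (i : ℕ)
        from rfl, Even.neg_one_pow ⟨(i : ℕ), by ring⟩, one_mul] at h
  have hμo : ∀ j : Fin (l + 1), mu E ⟨2 * (j : ℕ) + 1, by have := j.isLt; omega⟩ < 0 := by
    intro j
    have h := mu_sign hE ⟨2 * (j : ℕ) + 1, by have := j.isLt; omega⟩
    rw [show (((⟨2 * (j : ℕ) + 1, by have := j.isLt; omega⟩ : Fin (k + l + 2))) : ℕ)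
        = 2 * (j : ℕ) + 1 from rfl, Odd.neg_one_pow ⟨(j : ℕ), by ring⟩] at h
    linarith
  set S : ℝ := ∑ i : Fin (k + 1), mu E ⟨2 * (i : ℕ), by have := i.isLt; omega⟩ with hS_def
  have hSpos : 0 < S := Finset.sum_pos (fun i _ => hμe i) ⟨0, Finset.mem_univ 0⟩
  have hSne : S ≠ 0 := ne_of_gt hSpos
  have hsplit : ∀ dn : ℕ, dn < k + l + 1 →
      (∑ i : Fin (k + 1), mu E ⟨2 * (i : ℕ), by have := i.isLt; omega⟩ * s i ^ dn)
        + ∑ j : Fin (l + 1), mu E ⟨2 * (j : ℕ) + 1, by have := j.isLt; omega⟩ * t j ^ dn = 0 := by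
    intro dn hdn
    have h := mu_kernel E ⟨dn, hdn⟩
    rw [sum_parity_split k l hlk hk1 (fun r => mu E r * E r ^ ((⟨dn, hdn⟩ : Fin (k + l + 1)) : ℕ))] at h
    simp only [hEs, hEt] at h
    exact h
  have hTS : (∑ j : Fin (l + 1), mu E ⟨2 * (j : ℕ) + 1, by have := j.isLt; omega⟩) = -S := by
    have h := hsplit 0 (by omega)
    simp only [pow_zero, mul_one] at h
    rw [hS_def]
    linarith
  refine ⟨fun i => mu E ⟨2 * (i : ℕ), by have := i.isLt; omega⟩ / S,
    fun j => -(mu E ⟨2 * (j : ℕ) + 1, by have := j.isLt; omega⟩) / S, ?_, ?_, ?_, ?_, ?_, ?_⟩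
  · intro i
    exact div_pos (hμe i) hSpos
  · intro j
    have := hμo j
    apply div_pos (by linarith) hSpos
  · rw [← Finset.sum_div]
    rw [← hS_def, div_self hSne]
  · rw [← Finset.sum_div, Finset.sum_neg_distrib, hTS, neg_neg, div_self hSne]
  · intro dn hdn0 hdn
    have h := hsplit dn hdn
    have e1 : ∀ i : Fin (k + 1),
        mu E ⟨2 * (i : ℕ), by have := i.isLt; omega⟩ / S * s i ^ dn
          = mu E ⟨2 * (i : ℕ), by have := i.isLt; omega⟩ * s i ^ dn / S := by
      intro i; ring
    have e2 : ∀ j : Fin (l + 1),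
        -(mu E ⟨2 * (j : ℕ) + 1, by have := j.isLt; omega⟩) / S * t j ^ dn
          = -(mu E ⟨2 * (j : ℕ) + 1, by have := j.isLt; omega⟩ * t j ^ dn) / S := by
      intro j; ring
    rw [Finset.sum_congr rfl fun i _ => e1 i, Finset.sum_congr rfl fun j _ => e2 j,
      ← Finset.sum_div, ← Finset.sum_div]
    congr 1
    rw [Finset.sum_neg_distrib]
    linarith
  · intro a b ha1 hb1 hab
    set w : Fin (k + l + 2) → ℝ := fun r =>
      if h : (r : ℕ) % 2 = 0 then a ⟨(r : ℕ) / 2, by have := r.isLt; omega⟩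
      else -b ⟨(r : ℕ) / 2, by have := r.isLt; omega⟩ with hw_def
    have hwe : ∀ i : Fin (k + 1), w ⟨2 * (i : ℕ), by have := i.isLt; omega⟩ = a i := by
      intro i
      simp only [hw_def]
      rw [dif_pos (show (2 * (i : ℕ)) % 2 = 0 by omega)]
      exact congrArg a (Fin.ext (show 2 * (i : ℕ) / 2 = (i : ℕ) by omega))
    have hwo : ∀ j : Fin (l + 1), w ⟨2 * (j : ℕ) + 1, by have := j.isLt; omega⟩ = -b j := by
      intro j
      simp only [hw_def]
      rw [dif_neg (show ¬ (2 * (j : ℕ) + 1) % 2 = 0 by omega)]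
      exact congrArg (fun x => -(b x)) (Fin.ext (show (2 * (j : ℕ) + 1) / 2 = (j : ℕ) by omega))
    have hwker : ∀ d : Fin (k + l + 1), ∑ r, w r * E r ^ (d : ℕ) = 0 := by
      intro d
      rw [sum_parity_split k l hlk hk1 (fun r => w r * E r ^ (d : ℕ))]
      simp only [hEs, hEt, hwe, hwo]
      rcases Nat.eq_zero_or_pos (d : ℕ) with hd | hd
      · rw [hd]
        simp only [pow_zero, mul_one]
        rw [ha1, Finset.sum_neg_distrib, hb1]
        ring
      · have h9 := hab (d : ℕ) hd d.isLt
        have : ∑ j : Fin (l + 1), -b j * t j ^ (d : ℕ)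
            = -∑ j : Fin (l + 1), b j * t j ^ (d : ℕ) := by
          rw [← Finset.sum_neg_distrib]
          exact Finset.sum_congr rfl fun j _ => by ring
        rw [this]
        linarith
    have hlin := ker_eq hE.injective hwker
    set lam : ℝ := w 0 / mu E 0 with hlam_def
    have hlamS : lam * S = 1 := by
      have h1 : ∑ i : Fin (k + 1), w ⟨2 * (i : ℕ), by have := i.isLt; omega⟩ = 1 := by
        rw [Finset.sum_congr rfl fun i _ => hwe i]
        exact ha1
      have h2 : ∀ i : Fin (k + 1), w ⟨2 * (i : ℕ), by have := i.isLt; omega⟩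
          = lam * mu E ⟨2 * (i : ℕ), by have := i.isLt; omega⟩ :=
        fun i => hlin ⟨2 * (i : ℕ), by have := i.isLt; omega⟩
      rw [Finset.sum_congr rfl fun i _ => h2 i, ← Finset.mul_sum, ← hS_def] at h1
      exact h1
    have hlam : lam = 1 / S := by
      field_simp at hlamS ⊢
      linarith
    constructor
    · funext i
      have h1 := hwe i
      rw [hlin ⟨2 * (i : ℕ), by have := i.isLt; omega⟩] at h1
      rw [← h1, hlam]
      ring
    · funext j
      have h1 := hwo j
      rw [hlin ⟨2 * (j : ℕ) + 1, by have := j.isLt; omega⟩] at h1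
      have h2 : b j = -(lam * mu E ⟨2 * (j : ℕ) + 1, by have := j.isLt; omega⟩) := by
        rw [h1]
        ring
      rw [h2, hlam]
      ring



lemma vsign (k l : ℕ) (hlk : l ≤ k) (hk1 : k ≤ l + 1)
    (s : Fin (k + 1) → ℝ) (t : Fin (l + 1) → ℝ) (hs : StrictMono s) (ht : StrictMono t)
    (alt1 : ∀ j : Fin (l + 1), ∀ h : (j : ℕ) < k + 1, s ⟨(j : ℕ), h⟩ < t j)
    (alt2 : ∀ j : Fin (l + 1), ∀ h : (j : ℕ) + 1 < k + 1, t j < s ⟨(j : ℕ) + 1, h⟩)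
    (v : Fin (k + l + 1) → ℝ)
    (hv1 : ∀ (r : Fin (k + l + 1)) (h : (r : ℕ) < k + 1), v r = s ⟨(r : ℕ), h⟩)
    (hv2 : ∀ (r : Fin (k + l + 1)) (h : ¬ (r : ℕ) < k + 1),
      v r = t ⟨(r : ℕ) - k, by have := r.isLt; omega⟩) :
    0 < (-1 : ℝ) ^ (k * (k - 1) / 2) * (Matrix.vandermonde v).det := by
  classical
  have hst : ∀ (i j : ℕ) (hi : i < k + 1) (hj : j < l + 1), i ≤ j → s ⟨i, hi⟩ < t ⟨j, hj⟩ := by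
    intro i j hi hj hij
    have h1 : s ⟨i, hi⟩ ≤ s ⟨j, by omega⟩ := hs.monotone (by rw [Fin.mk_le_mk]; omega)
    have h2 := alt1 ⟨j, hj⟩ (show j < k + 1 by omega)
    exact lt_of_le_of_lt h1 h2
  have hts : ∀ (i j : ℕ) (hi : i < k + 1) (hj : j < l + 1), j < i → t ⟨j, hj⟩ < s ⟨i, hi⟩ := by
    intro i j hi hj hij
    have h2 := alt2 ⟨j, hj⟩ (show j + 1 < k + 1 by omega)
    have h1 : s ⟨j + 1, by omega⟩ ≤ s ⟨i, hi⟩ := hs.monotone (by rw [Fin.mk_le_mk]; omega)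
    exact lt_of_lt_of_le h2 h1
  rw [Matrix.det_vandermonde]
  have hrow : ∀ r : Fin (k + l + 1),
      0 < (-1 : ℝ) ^ (if (r : ℕ) < k + 1 then (r : ℕ) - 1 else 0)
        * ∏ r' ∈ Finset.Ioi r, (v r' - v r) := by
    intro r
    by_cases hr : (r : ℕ) < k + 1
    · rw [if_pos hr]
      have hne : ∀ x ∈ Finset.Ioi r, v x - v r ≠ 0 := by
        intro x hx
        have hxr : r < x := Finset.mem_Ioi.1 hx
        rw [Fin.lt_def] at hxr
        refine sub_ne_zero.2 ?_
        by_cases hxk : (x : ℕ) < k + 1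
        · rw [hv1 x hxk, hv1 r hr]
          exact ne_of_gt (hs (by rw [Fin.mk_lt_mk]; omega))
        · rw [hv2 x hxk, hv1 r hr]
          rcases le_or_gt (r : ℕ) ((x : ℕ) - k) with hc | hc
          · exact ne_of_gt (hst (r : ℕ) ((x : ℕ) - k) hr (by have := x.isLt; omega) hc)
          · exact ne_of_lt (hts (r : ℕ) ((x : ℕ) - k) hr (by have := x.isLt; omega) hc)
      have hcard : ((Finset.Ioi r).filter (fun x => v x - v r < 0)).card = (r : ℕ) - 1 := by
        have hseteq : (Finset.Ioi r).filter (fun x => v x - v r < 0)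
            = Finset.univ.filter
              (fun (x : Fin (k + l + 1)) => k + 1 ≤ (x : ℕ) ∧ (x : ℕ) < k + (r : ℕ)) := by
          ext x
          simp only [Finset.mem_filter, Finset.mem_Ioi, Finset.mem_univ, true_and, sub_neg]
          constructor
          · rintro ⟨hx1, hx2⟩
            rw [Fin.lt_def] at hx1
            by_cases hxk : (x : ℕ) < k + 1
            · exfalso
              rw [hv1 x hxk, hv1 r hr] at hx2
              have := hs (show (⟨(r : ℕ), hr⟩ : Fin (k + 1)) < ⟨(x : ℕ), hxk⟩ by
                rw [Fin.mk_lt_mk]; omega)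
              linarith
            · refine ⟨by omega, ?_⟩
              by_contra hc
              push_neg at hc
              rw [hv1 r hr, hv2 x hxk] at hx2
              have := hst (r : ℕ) ((x : ℕ) - k) hr (by have := x.isLt; omega) (by omega)
              linarith
          · rintro ⟨hx1, hx2⟩
            constructor
            · rw [Fin.lt_def]
              omega
            · rw [hv1 r hr, hv2 x (by omega)]
              exact hts (r : ℕ) ((x : ℕ) - k) hr (by have := x.isLt; omega) (by omega)
        rw [hseteq, card_filter_interval _ _ _ (by have := r.isLt; omega)]
        omega
      have h := neg_pow_prod_pos (Finset.Ioi r) (fun x => v x - v r) hne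
      rw [hcard] at h
      exact h
    · rw [if_neg hr, pow_zero, one_mul]
      apply Finset.prod_pos
      intro x hx
      have hxr : r < x := Finset.mem_Ioi.1 hx
      rw [Fin.lt_def] at hxr
      have hxk : ¬ ((x : ℕ) < k + 1) := by omega
      rw [hv2 x hxk, hv2 r hr]
      exact sub_pos.2 (ht (by rw [Fin.mk_lt_mk]; omega))
  have hall := Finset.prod_pos (fun r (_ : r ∈ (Finset.univ : Finset (Fin (k + l + 1)))) => hrow r)
  rw [Finset.prod_mul_distrib, Finset.prod_pow_eq_pow_sum] at hall
  have hsum : (∑ r : Fin (k + l + 1), (if (r : ℕ) < k + 1 then (r : ℕ) - 1 else 0))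
      = k * (k - 1) / 2 := by
    rw [Fin.sum_univ_eq_sum_range (fun x => if x < k + 1 then x - 1 else 0)]
    rw [← Finset.sum_subset (Finset.range_subset_range.2 (by omega : k + 1 ≤ k + l + 1))
      (fun x hx hnx => if_neg (by simp only [Finset.mem_range] at hx hnx; omega))]
    rw [Finset.sum_congr rfl (fun x hx => if_pos (Finset.mem_range.1 hx))]
    rw [Finset.sum_range_succ' (fun x => x - 1) k]
    simp only [Nat.add_sub_cancel]
    rw [Finset.sum_range_id]
    simp
  rw [hsum] at hall
  exact hall



lemma sum_split1 (k l : ℕ) (f : Fin (k + l + 1) → ℝ) :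
    ∑ r, f r = ∑ i : Fin (k + 1), f ⟨(i : ℕ), by have := i.isLt; omega⟩
      + ∑ j : Fin l, f ⟨k + 1 + (j : ℕ), by have := j.isLt; omega⟩ := by
  rw [← (finCongr (by omega : (k + 1) + l = k + l + 1)).sum_comp,
    ← finSumFinEquiv.sum_comp, Fintype.sum_sum_type]
  congr 1 <;>
    (apply Finset.sum_congr rfl; intro x _; congr 1; exact Fin.ext (by simp))

end S7

open S7

/-- Two simplices `σ = conv{c(s_0),…,c(s_k)}` and `τ = conv{c(t_0),…,c(t_ℓ)}` of
complementary dimensions `k + ℓ = m`, `k ≥ ℓ`, spanned by points of the moment curve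
`c(x) = (x, …, x^m)` intersect iff `k = ⌈m/2⌉` and the vertices alternate along the curve;
in that case they meet in a single point `p`, and the signed intersection number, i.e. the
sign of `det((1,p),(1,c(s_1)),…,(1,c(s_k)),(1,c(t_1)),…,(1,c(t_ℓ)))`, equals
`(−1)^{k(k−1)/2}`. -/
theorem stmt7 (m k l : ℕ) (hm : k + l = m) (hlk : l ≤ k)
    (c : ℝ → Fin m → ℝ)
    (hc : ∀ (x : ℝ) (i : Fin m), c x i = x ^ ((i : ℕ) + 1))
    (s : Fin (k + 1) → ℝ) (t : Fin (l + 1) → ℝ)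
    (hs : StrictMono s) (ht : StrictMono t)
    (hall : ∀ i j, s i ≠ t j)
    (heq0 : k = l → s 0 < t 0) :
    (((convexHull ℝ (Set.range fun i => c (s i))) ∩
        (convexHull ℝ (Set.range fun j => c (t j)))).Nonempty ↔
      (k = (m + 1) / 2 ∧
        (∀ j : Fin (l + 1), s ⟨(j : ℕ), by have := j.isLt; omega⟩ < t j) ∧
        (∀ j : Fin (l + 1), ∀ hj : (j : ℕ) + 1 < k + 1, t j < s ⟨(j : ℕ) + 1, hj⟩))) ∧
    ∀ p ∈ (convexHull ℝ (Set.range fun i => c (s i))) ∩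
        (convexHull ℝ (Set.range fun j => c (t j))),
      ((convexHull ℝ (Set.range fun i => c (s i))) ∩
        (convexHull ℝ (Set.range fun j => c (t j)))) = {p} ∧
      Real.sign (Matrix.det (Matrix.of fun (i j2 : Fin (m + 1)) =>
        (if (j2 : ℕ) = 0 then Fin.cons (1 : ℝ) p
         else if hj : (j2 : ℕ) < k + 1 then Fin.cons (1 : ℝ) (c (s ⟨(j2 : ℕ), hj⟩))
         else Fin.cons (1 : ℝ) (c (t ⟨(j2 : ℕ) - k, by have := j2.isLt; omega⟩)) :
           Fin (m + 1) → ℝ) i))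
        = (-1 : ℝ) ^ (k * (k - 1) / 2) := by
  subst hm
  classical
  set f : Fin (k + 1) → Fin (k + l) → ℝ := fun i => fun d => s i ^ ((d : ℕ) + 1) with hf
  set g : Fin (l + 1) → Fin (k + l) → ℝ := fun j => fun d => t j ^ ((d : ℕ) + 1) with hg
  have hcfun : ∀ x : ℝ, c x = fun d : Fin (k + l) => x ^ ((d : ℕ) + 1) :=
    fun x => funext fun d => hc x d
  have hfc : (fun i => c (s i)) = f := funext fun i => hcfun (s i)
  have hgc : (fun j => c (t j)) = g := funext fun j => hcfun (t j)
  rw [hfc, hgc]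
  have hmem : ∀ (q : Fin (k + l) → ℝ),
      q ∈ convexHull ℝ (Set.range f) ∩ convexHull ℝ (Set.range g) ↔
      ∃ (a : Fin (k + 1) → ℝ) (b : Fin (l + 1) → ℝ),
        (∀ i, 0 ≤ a i) ∧ (∀ j, 0 ≤ b j) ∧ (∑ i, a i = 1) ∧ (∑ j, b j = 1) ∧
        (∀ d : Fin (k + l), q d = ∑ i, a i * s i ^ ((d : ℕ) + 1)) ∧
        (∀ d : Fin (k + l), q d = ∑ j, b j * t j ^ ((d : ℕ) + 1)) := by
    intro q
    rw [Set.mem_inter_iff, mem_hull_iff, mem_hull_iff]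
    constructor
    · rintro ⟨⟨a, ha0, ha1, hae⟩, ⟨b, hb0, hb1, hbe⟩⟩
      refine ⟨a, b, ha0, hb0, ha1, hb1, ?_, ?_⟩
      · intro d
        rw [← hae]
        rw [Finset.sum_apply]
        exact Finset.sum_congr rfl fun i _ => by simp [hf]
      · intro d
        rw [← hbe]
        rw [Finset.sum_apply]
        exact Finset.sum_congr rfl fun j _ => by simp [hg]
    · rintro ⟨a, b, ha0, hb0, ha1, hb1, hqa, hqb⟩
      constructor
      · refine ⟨a, ha0, ha1, ?_⟩
        funext d
        rw [Finset.sum_apply]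
        rw [hqa d]
        exact Finset.sum_congr rfl fun i _ => by simp [hf]
      · refine ⟨b, hb0, hb1, ?_⟩
        funext d
        rw [Finset.sum_apply]
        rw [hqb d]
        exact Finset.sum_congr rfl fun j _ => by simp [hg]
  have KEY1 : (convexHull ℝ (Set.range f) ∩ convexHull ℝ (Set.range g)).Nonempty →
      (k ≤ l + 1 ∧ (∀ j : Fin (l + 1), ∀ h : (j : ℕ) < k + 1, s ⟨(j : ℕ), h⟩ < t j) ∧
        (∀ j : Fin (l + 1), ∀ h : (j : ℕ) + 1 < k + 1, t j < s ⟨(j : ℕ) + 1, h⟩)) := by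
    rintro ⟨q, hq⟩
    obtain ⟨a, b, ha0, hb0, ha1, hb1, hqa, hqb⟩ := (hmem q).1 hq
    exact forward k l hlk s t hs ht hall heq0 a b ha0 hb0 ha1 hb1
      (fun d => (hqa d).symm.trans (hqb d))
  constructor
  · constructor
    · intro hne
      obtain ⟨hk1, a1, a2⟩ := KEY1 hne
      exact ⟨by omega, fun j => a1 j (by have := j.isLt; omega), a2⟩
    · rintro ⟨hk, a1, a2⟩
      have hk1 : k ≤ l + 1 := by omega
      obtain ⟨A, B, hA, hB, hA1, hB1, hAB, huniq⟩ :=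
        main_alt k l hlk hk1 s t hs ht (fun j h => a1 j) a2
      refine ⟨fun d => ∑ i, A i * s i ^ ((d : ℕ) + 1), (hmem _).2
        ⟨A, B, fun i => le_of_lt (hA i), fun j => le_of_lt (hB j), hA1, hB1,
          fun d => rfl, fun d => ?_⟩⟩
      exact hAB ((d : ℕ) + 1) (by omega) (by have := d.isLt; omega)
  · intro p hp
    obtain ⟨hk1, a1, a2⟩ := KEY1 ⟨p, hp⟩
    obtain ⟨A, B, hA, hB, hA1, hB1, hAB, huniq⟩ := main_alt k l hlk hk1 s t hs ht a1 a2
    obtain ⟨a, b, ha0, hb0, ha1, hb1, hpa, hpb⟩ := (hmem p).1 hp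
    have habs : ∀ (q' : Fin (k + l) → ℝ) (a' : Fin (k + 1) → ℝ) (b' : Fin (l + 1) → ℝ),
        (∀ d : Fin (k + l), q' d = ∑ i, a' i * s i ^ ((d : ℕ) + 1)) →
        (∀ d : Fin (k + l), q' d = ∑ j, b' j * t j ^ ((d : ℕ) + 1)) →
        ∀ dn : ℕ, 0 < dn → dn < k + l + 1 →
          ∑ i, a' i * s i ^ dn = ∑ j, b' j * t j ^ dn := by
      intro q' a' b' hqa hqb dn h0 h1
      have h2 : ∑ i, a' i * s i ^ ((dn - 1) + 1) = ∑ j, b' j * t j ^ ((dn - 1) + 1) :=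
        (hqa ⟨dn - 1, by omega⟩).symm.trans (hqb ⟨dn - 1, by omega⟩)
      have he : dn - 1 + 1 = dn := by omega
      rw [he] at h2
      exact h2
    obtain ⟨haA, hbB⟩ := huniq a b ha1 hb1 (habs p a b hpa hpb)
    have hpdet : ∀ q ∈ convexHull ℝ (Set.range f) ∩ convexHull ℝ (Set.range g), q = p := by
      intro q hq
      obtain ⟨a', b', ha0', hb0', ha1', hb1', hqa', hqb'⟩ := (hmem q).1 hq
      obtain ⟨haA', hbB'⟩ := huniq a' b' ha1' hb1' (habs q a' b' hqa' hqb')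
      funext d
      rw [hqa' d, haA', hpa d, haA]
    constructor
    · exact Set.eq_singleton_iff_unique_mem.2 ⟨hp, hpdet⟩
    · -- determinant sign
      have hcons : ∀ x : ℝ, (Fin.cons (1 : ℝ) (c x) : Fin (k + l + 1) → ℝ)
          = fun d : Fin (k + l + 1) => x ^ (d : ℕ) := by
        intro x
        funext d
        refine Fin.cases ?_ ?_ d
        · simp
        · intro i
          simp [hc x i]
      set v : Fin (k + l + 1) → ℝ := fun r =>
        if h : (r : ℕ) < k + 1 then s ⟨(r : ℕ), h⟩
        else t ⟨(r : ℕ) - k, by have := r.isLt; omega⟩ with hv_def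
      have hv1 : ∀ (r : Fin (k + l + 1)) (h : (r : ℕ) < k + 1), v r = s ⟨(r : ℕ), h⟩ := by
        intro r h
        simp only [hv_def]
        rw [dif_pos h]
      have hv2 : ∀ (r : Fin (k + l + 1)) (h : ¬ (r : ℕ) < k + 1),
          v r = t ⟨(r : ℕ) - k, by have := r.isLt; omega⟩ := by
        intro r h
        simp only [hv_def]
        rw [dif_neg h]
      have hvs := vsign k l hlk hk1 s t hs ht a1 a2 v hv1 hv2
      have key : ∀ M : Matrix (Fin (k + l + 1)) (Fin (k + l + 1)) ℝ,
          (∀ i, M i 0 = (Fin.cons (1 : ℝ) p : Fin (k + l + 1) → ℝ) i) →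
          (∀ (i j2 : Fin (k + l + 1)), (j2 : ℕ) ≠ 0 → M i j2 = v j2 ^ (i : ℕ)) →
          Real.sign M.det = (-1 : ℝ) ^ (k * (k - 1) / 2) := by
        intro M hM0 hMcol
        have hMT : Mᵀ = Matrix.updateRow (Matrix.vandermonde v) 0 (Fin.cons (1 : ℝ) p) := by
          ext j2 d
          rw [Matrix.transpose_apply]
          by_cases h0 : j2 = 0
          · subst h0
            rw [Matrix.updateRow_self]
            exact hM0 d
          · rw [Matrix.updateRow_ne h0]
            rw [Matrix.vandermonde_apply]
            exact hMcol d j2 (fun hc2 => h0 (Fin.ext hc2))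
        have hrow0 : (Fin.cons (1 : ℝ) p : Fin (k + l + 1) → ℝ)
            = ∑ r : Fin (k + l + 1),
              (if h : (r : ℕ) < k + 1 then A ⟨(r : ℕ), h⟩ else 0) • (Matrix.vandermonde v) r := by
          funext d
          rw [Finset.sum_apply]
          have hterm : ∀ r : Fin (k + l + 1),
              ((if h : (r : ℕ) < k + 1 then A ⟨(r : ℕ), h⟩ else 0) • (Matrix.vandermonde v) r) d
                = (if h : (r : ℕ) < k + 1 then A ⟨(r : ℕ), h⟩ * (s ⟨(r : ℕ), h⟩) ^ (d : ℕ) else 0) := by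
            intro r
            by_cases h : (r : ℕ) < k + 1
            · rw [dif_pos h, dif_pos h]
              simp [Matrix.vandermonde_apply, hv1 r h]
            · rw [dif_neg h, dif_neg h]
              simp
          rw [Finset.sum_congr rfl fun r _ => hterm r]
          rw [sum_split1 k l (fun r =>
            if h : (r : ℕ) < k + 1 then A ⟨(r : ℕ), h⟩ * (s ⟨(r : ℕ), h⟩) ^ (d : ℕ) else 0)]
          have h1 : ∀ i : Fin (k + 1),
              (if h : ((⟨(i : ℕ), by have := i.isLt; omega⟩ : Fin (k + l + 1)) : ℕ) < k + 1
                then A ⟨((⟨(i : ℕ), by have := i.isLt; omega⟩ : Fin (k + l + 1)) : ℕ), h⟩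
                  * (s ⟨((⟨(i : ℕ), by have := i.isLt; omega⟩ : Fin (k + l + 1)) : ℕ), h⟩) ^ (d : ℕ)
                else 0) = A i * s i ^ (d : ℕ) := by
            intro i
            rw [dif_pos (show (i : ℕ) < k + 1 from i.isLt)]
          have h2 : ∀ j : Fin l,
              (if h : ((⟨k + 1 + (j : ℕ), by have := j.isLt; omega⟩ : Fin (k + l + 1)) : ℕ) < k + 1
                then A ⟨((⟨k + 1 + (j : ℕ), by have := j.isLt; omega⟩ : Fin (k + l + 1)) : ℕ), h⟩
                  * (s ⟨((⟨k + 1 + (j : ℕ), by have := j.isLt; omega⟩ : Fin (k + l + 1)) : ℕ), h⟩) ^ (d : ℕ)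
                else 0) = 0 := by
            intro j
            rw [dif_neg (show ¬ (k + 1 + (j : ℕ) < k + 1) by omega)]
          rw [Finset.sum_congr rfl fun i _ => h1 i, Finset.sum_congr rfl fun j _ => h2 j]
          rw [Finset.sum_const_zero, add_zero]
          refine Fin.cases ?_ ?_ d
          · simp only [Fin.cons_zero, Fin.val_zero, pow_zero, mul_one]
            rw [hA1]
          · intro d'
            simp only [Fin.cons_succ, Fin.val_succ]
            rw [hpa d', haA]
        rw [← Matrix.det_transpose M, hMT, hrow0, Matrix.det_updateRow_sum]
        rw [dif_pos (show ((0 : Fin (k + l + 1)) : ℕ) < k + 1 by simp)]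
        have hidx : (⟨((0 : Fin (k + l + 1)) : ℕ), by simp⟩ : Fin (k + 1)) = 0 :=
          Fin.ext (by simp)
        rw [hidx, smul_eq_mul]
        rcases Nat.even_or_odd (k * (k - 1) / 2) with hN | hN
        · rw [Even.neg_one_pow hN] at hvs ⊢
          rw [one_mul] at hvs
          exact Real.sign_of_pos (mul_pos (hA 0) hvs)
        · rw [Odd.neg_one_pow hN] at hvs ⊢
          have hneg : (Matrix.vandermonde v).det < 0 := by linarith
          rw [Real.sign_of_neg (mul_neg_of_pos_of_neg (hA 0) hneg)]
      apply key
      · intro i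
        simp only [Matrix.of_apply]
        rw [if_pos (show ((0 : Fin (k + l + 1)) : ℕ) = 0 by simp)]
      · intro i j2 h0
        simp only [Matrix.of_apply]
        rw [if_neg h0]
        by_cases hj : (j2 : ℕ) < k + 1
        · rw [dif_pos hj, hv1 j2 hj, hcons]
        · rw [dif_neg hj, hv2 j2 hj, hcons]
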